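/- Let q be an odd prime dividing e1 exactly once (q ∥ e1), with e1+e2+e3 = 0 and q ∤ n·e2·e3·d1, and let d2, d3 be square-free integers both divisible by q. Then the system e1·n·t² + d2·u2² − d3·u3² = 0, e2·n·t² + d3·u3² − d1·u1² = 0, e3·n·t² + d1·u1² − d2·u2² = 0 has a nonzero ℚ_q-point if and only if e2·n·d1 is a square modulo q. -/

import Mathlib

open Polynomial

section helpers
variable {q : ℕ} [Fact q.Prime]

lemma toZMod_eq_zero_iff' (x : ℤ_[q]) :
    PadicInt.toZMod x = 0 ↔ (q : ℤ_[q]) ∣ x := by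
  rw [← RingHom.mem_ker, PadicInt.ker_toZMod, PadicInt.maximalIdeal_eq_span_p,
    Ideal.mem_span_singleton]

lemma padic_norm_one_of_toZMod_ne (x : ℤ_[q])
    (h : PadicInt.toZMod x ≠ 0) : ‖x‖ = 1 := by
  refine le_antisymm x.2 (not_lt.1 fun hlt => h ?_)
  rw [toZMod_eq_zero_iff']
  exact (PadicInt.norm_lt_one_iff_dvd x).1 hlt

lemma int_unit_padic {m : ℤ} (hm : ¬ (q : ℤ) ∣ m) : IsUnit ((m : ℤ_[q])) := by
  rw [PadicInt.isUnit_iff]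
  exact le_antisymm (PadicInt.norm_le_one _)
    (not_lt.1 fun hlt => hm ((PadicInt.norm_int_lt_one_iff_dvd m).1 hlt))

lemma int_padic_not_dvd {m : ℤ} (hm : ¬ (q : ℤ) ∣ m) : ¬ (q : ℤ_[q]) ∣ (m : ℤ_[q]) := by
  intro h
  exact hm ((PadicInt.norm_int_lt_one_iff_dvd m).1 ((PadicInt.norm_lt_one_iff_dvd _).2 h))

lemma padic_sq_lift (hq : q ≠ 2) (α : ℤ_[q])
    (h0 : PadicInt.toZMod α ≠ 0) (hsq : IsSquare (PadicInt.toZMod α)) :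
    ∃ z : ℤ_[q], z ^ 2 = α := by
  obtain ⟨b, hb⟩ := hsq
  have hbne : b ≠ 0 := fun h => h0 (by simp [hb, h])
  set a0 : ℤ_[q] := (b.val : ℤ_[q]) with ha0def
  have ha0 : PadicInt.toZMod a0 = b := by
    simp [ha0def, map_natCast, ZMod.natCast_val, ZMod.cast_id]
  set F : Polynomial ℤ_[q] := X ^ 2 - C α with hF
  have hFe : ∀ z : ℤ_[q], F.eval z = z ^ 2 - α := by intro z; simp [hF]
  have hFd : F.derivative = C 2 * X := by
    simp [hF, derivative_pow]
  have hda : F.derivative.eval a0 = 2 * a0 := by simp [hFd]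
  have h2 : ‖(2 : ℤ_[q])‖ = 1 := by
    have : ¬ ((q : ℤ) ∣ (2 : ℤ)) := by
      intro h
      have h2 : q ∣ 2 := by exact_mod_cast h
      exact hq ((Nat.prime_dvd_prime_iff_eq Fact.out Nat.prime_two).1 h2)
    have h2' : ((2 : ℤ) : ℤ_[q]) = (2 : ℤ_[q]) := by push_cast; ring
    refine le_antisymm (PadicInt.norm_le_one _) (not_lt.1 fun hlt => this ?_)
    rw [← h2'] at hlt
    exact (PadicInt.norm_int_lt_one_iff_dvd 2).1 hlt
  have ha0n : ‖a0‖ = 1 := padic_norm_one_of_toZMod_ne _ (by rw [ha0]; exact hbne)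
  have hnorm : ‖F.eval a0‖ < ‖F.derivative.eval a0‖ ^ 2 := by
    rw [hda, hFe, norm_mul, h2, ha0n]
    norm_num
    refine (PadicInt.norm_lt_one_iff_dvd _).2 ?_
    rw [← toZMod_eq_zero_iff']
    simp [ha0, hb]
    ring
  obtain ⟨z, hz, -⟩ := hensels_lemma hnorm
  rw [Polynomial.coe_aeval_eq_eval, hFe] at hz
  exact ⟨z, sub_eq_zero.mp hz⟩

lemma padic_rep (hq : q ≠ 2) (γ β : ℤ_[q]) (hγ : IsUnit γ)
    (c : ZMod q) (hc : c ≠ 0)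
    (hβ : PadicInt.toZMod β = PadicInt.toZMod γ * c ^ 2) :
    ∃ z : ℤ_[q], γ * z ^ 2 = β := by
  obtain ⟨w, hw⟩ := hγ.exists_right_inv
  have hwz : PadicInt.toZMod γ * PadicInt.toZMod w = 1 := by
    rw [← map_mul, hw, map_one]
  have h1 : PadicInt.toZMod (β * w) = c ^ 2 := by
    rw [map_mul, hβ]
    calc PadicInt.toZMod γ * c ^ 2 * PadicInt.toZMod w
        = (PadicInt.toZMod γ * PadicInt.toZMod w) * c ^ 2 := by ring
      _ = c ^ 2 := by rw [hwz, one_mul]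
  have h0 : PadicInt.toZMod (β * w) ≠ 0 := by
    rw [h1]; exact pow_ne_zero _ hc
  obtain ⟨z, hz⟩ := padic_sq_lift hq (β * w) h0 ⟨c, by rw [h1]; ring⟩
  refine ⟨z, ?_⟩
  calc γ * z ^ 2 = γ * (β * w) := by rw [hz]
    _ = β * (γ * w) := by ring
    _ = β := by rw [hw, mul_one]

lemma exists_max4 (a b c d : ℚ_[q]) (h : ¬(a = 0 ∧ b = 0 ∧ c = 0 ∧ d = 0)) :
    ∃ m : ℚ_[q], m ≠ 0 ∧ (m = a ∨ m = b ∨ m = c ∨ m = d) ∧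
      ‖a‖ ≤ ‖m‖ ∧ ‖b‖ ≤ ‖m‖ ∧ ‖c‖ ≤ ‖m‖ ∧ ‖d‖ ≤ ‖m‖ := by
  obtain ⟨m, hmem, h1, h2, h3, h4⟩ :
      ∃ m : ℚ_[q], (m = a ∨ m = b ∨ m = c ∨ m = d) ∧
        ‖a‖ ≤ ‖m‖ ∧ ‖b‖ ≤ ‖m‖ ∧ ‖c‖ ≤ ‖m‖ ∧ ‖d‖ ≤ ‖m‖ := by
    rcases le_total ‖a‖ ‖b‖ with hab | hab <;>
      rcases le_total ‖c‖ ‖d‖ with hcd | hcd <;>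
      [rcases le_total ‖b‖ ‖d‖ with he | he;
       rcases le_total ‖b‖ ‖c‖ with he | he;
       rcases le_total ‖a‖ ‖d‖ with he | he;
       rcases le_total ‖a‖ ‖c‖ with he | he] <;>
      [exact ⟨d, by tauto, by linarith, by linarith, by linarith, by linarith⟩;
       exact ⟨b, by tauto, by linarith, by linarith, by linarith, by linarith⟩;
       exact ⟨c, by tauto, by linarith, by linarith, by linarith, by linarith⟩;
       exact ⟨b, by tauto, by linarith, by linarith, by linarith, by linarith⟩;
       exact ⟨d, by tauto, by linarith, by linarith, by linarith, by linarith⟩;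
       exact ⟨a, by tauto, by linarith, by linarith, by linarith, by linarith⟩;
       exact ⟨c, by tauto, by linarith, by linarith, by linarith, by linarith⟩;
       exact ⟨a, by tauto, by linarith, by linarith, by linarith, by linarith⟩]
  refine ⟨m, fun hm0 => h ?_, hmem, h1, h2, h3, h4⟩
  subst hm0
  simp only [norm_zero] at h1 h2 h3 h4
  refine ⟨by simpa using le_antisymm h1 (norm_nonneg a), by simpa using le_antisymm h2 (norm_nonneg b),
    by simpa using le_antisymm h3 (norm_nonneg c), by simpa using le_antisymm h4 (norm_nonneg d)⟩

end helpers


theorem stmt15 (q : ℕ) [Fact q.Prime] (hq : q ≠ 2)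
    (n e1 e2 e3 d1 d2 d3 : ℤ)
    (hqe1 : (q : ℤ) ∣ e1) (hqe1' : ¬ ((q : ℤ) ^ 2 ∣ e1))
    (hs : e1 + e2 + e3 = 0)
    (hqunit : ¬ (q : ℤ) ∣ n * e2 * e3 * d1)
    (hsf2 : Squarefree d2) (hsf3 : Squarefree d3)
    (hqd2 : (q : ℤ) ∣ d2) (hqd3 : (q : ℤ) ∣ d3) :
    (∃ t u1 u2 u3 : ℚ_[q], ¬ (t = 0 ∧ u1 = 0 ∧ u2 = 0 ∧ u3 = 0) ∧
        (e1 : ℚ_[q]) * n * t ^ 2 + d2 * u2 ^ 2 - d3 * u3 ^ 2 = 0 ∧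
        (e2 : ℚ_[q]) * n * t ^ 2 + d3 * u3 ^ 2 - d1 * u1 ^ 2 = 0 ∧
        (e3 : ℚ_[q]) * n * t ^ 2 + d1 * u1 ^ 2 - d2 * u2 ^ 2 = 0)
    ↔ IsSquare ((e2 * n * d1 : ℤ) : ZMod q) := by
  have hp : q.Prime := Fact.out
  obtain ⟨ε1, he1⟩ := hqe1
  obtain ⟨δ2, hd2⟩ := hqd2
  obtain ⟨δ3, hd3⟩ := hqd3
  have hqn : ¬ (q : ℤ) ∣ n := fun h => hqunit (Dvd.dvd.mul_right (h.mul_right _) _ |>.mul_right _)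
  have hqe2 : ¬ (q : ℤ) ∣ e2 := fun h => hqunit (((h.mul_left n).mul_right e3).mul_right d1)
  have hqe3 : ¬ (q : ℤ) ∣ e3 := fun h => hqunit (((h.mul_left (n*e2))).mul_right d1)
  have hqd1 : ¬ (q : ℤ) ∣ d1 := fun h => hqunit (h.mul_left (n*e2*e3))
  have hqε1 : ¬ (q : ℤ) ∣ ε1 := fun h => hqe1' (by rw [he1, sq]; exact mul_dvd_mul_left _ h)
  have h2le := hp.two_le
  have hqδ2 : ¬ (q : ℤ) ∣ δ2 := by
    intro h
    have hu : IsUnit ((q:ℤ)) := hsf2 q (by rw [hd2]; exact mul_dvd_mul_left _ h)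
    rcases Int.isUnit_iff.1 hu with h1 | h1 <;> omega
  have hqδ3 : ¬ (q : ℤ) ∣ δ3 := by
    intro h
    have hu : IsUnit ((q:ℤ)) := hsf3 q (by rw [hd3]; exact mul_dvd_mul_left _ h)
    rcases Int.isUnit_iff.1 hu with h1 | h1 <;> omega
  have hpz : Prime (q : ℤ) := Nat.prime_iff_prime_int.1 hp
  have hz : ∀ m : ℤ, ¬ (q:ℤ) ∣ m → ((m : ZMod q) ≠ 0) := fun m hm h =>
    hm ((ZMod.intCast_zmod_eq_zero_iff_dvd m q).1 h)
  have hq0 : (q : ℤ_[q]) ≠ 0 := by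
    intro h
    have hnp : ‖(q : ℤ_[q])‖ = ((q:ℝ))⁻¹ := PadicInt.norm_p
    rw [h, norm_zero] at hnp
    have : (0:ℝ) < ((q:ℝ))⁻¹ := by positivity
    rw [← hnp] at this
    exact lt_irrefl _ this
  constructor
  · rintro ⟨t, u1, u2, u3, hne, h1, h2, h3⟩
    obtain ⟨m, hm0, hmem, b1, b2, b3, b4⟩ := exists_max4 t u1 u2 u3 hne
    set T : ℤ_[q] := ⟨t / m, by rw [norm_div]; exact (div_le_one (norm_pos_iff.2 hm0)).2 b1⟩ with hTdef
    set U1 : ℤ_[q] := ⟨u1 / m, by rw [norm_div]; exact (div_le_one (norm_pos_iff.2 hm0)).2 b2⟩ with hU1def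
    set U2 : ℤ_[q] := ⟨u2 / m, by rw [norm_div]; exact (div_le_one (norm_pos_iff.2 hm0)).2 b3⟩ with hU2def
    set U3 : ℤ_[q] := ⟨u3 / m, by rw [norm_div]; exact (div_le_one (norm_pos_iff.2 hm0)).2 b4⟩ with hU3def
    have E1 : (e1 : ℤ_[q]) * n * T ^ 2 + d2 * U2 ^ 2 - d3 * U3 ^ 2 = 0 := by
      apply Subtype.coe_injective
      push_cast
      show (e1 : ℚ_[q]) * n * (t/m) ^ 2 + d2 * (u2/m) ^ 2 - d3 * (u3/m) ^ 2 = 0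
      linear_combination (m⁻¹)^2 * h1
    have E2 : (e2 : ℤ_[q]) * n * T ^ 2 + d3 * U3 ^ 2 - d1 * U1 ^ 2 = 0 := by
      apply Subtype.coe_injective
      push_cast
      show (e2 : ℚ_[q]) * n * (t/m) ^ 2 + d3 * (u3/m) ^ 2 - d1 * (u1/m) ^ 2 = 0
      linear_combination (m⁻¹)^2 * h2
    have E1' : (ε1 : ℤ_[q]) * n * T ^ 2 + δ2 * U2 ^ 2 - δ3 * U3 ^ 2 = 0 := by
      have key : (q:ℤ_[q]) * ((ε1 : ℤ_[q]) * n * T ^ 2 + δ2 * U2 ^ 2 - δ3 * U3 ^ 2)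
          = (e1 : ℤ_[q]) * n * T ^ 2 + d2 * U2 ^ 2 - d3 * U3 ^ 2 := by
        rw [he1, hd2, hd3]; push_cast; ring
      exact (mul_eq_zero.1 (key.trans E1)).resolve_left hq0
    have hd3z : ((d3 : ℤ) : ZMod q) = 0 := by
      rw [ZMod.intCast_zmod_eq_zero_iff_dvd]; exact ⟨δ3, hd3⟩
    have hE2bar : (e2 : ZMod q) * n * (PadicInt.toZMod T)^2
        - d1 * (PadicInt.toZMod U1)^2 = 0 := by
      have h' := congrArg (PadicInt.toZMod : ℤ_[q] →+* ZMod q) E2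
      simp only [map_add, map_sub, map_mul, map_pow, map_intCast, map_zero] at h'
      rw [hd3z] at h'
      linear_combination h'
    by_cases hT0 : PadicInt.toZMod T = 0
    · exfalso
      have hU1z : PadicInt.toZMod U1 = 0 := by
        have hd1ne : (d1 : ZMod q) ≠ 0 := hz d1 hqd1
        have : (d1 : ZMod q) * (PadicInt.toZMod U1)^2 = 0 := by
          linear_combination -hE2bar + (e2:ZMod q) * n * (PadicInt.toZMod T + 0) * hT0
        have := (mul_eq_zero.1 this).resolve_left hd1ne
        exact (pow_eq_zero_iff (by norm_num : (2:ℕ) ≠ 0)).1 this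
      obtain ⟨T', hT'⟩ := (toZMod_eq_zero_iff' T).1 hT0
      obtain ⟨U1', hU1'⟩ := (toZMod_eq_zero_iff' U1).1 hU1z
      have hd3c : ((d3:ℤ):ℤ_[q]) = (q:ℤ_[q]) * ((δ3:ℤ):ℤ_[q]) := by rw [hd3]; push_cast; ring
      have hdU3 : (q:ℤ_[q]) ∣ U3 := by
        have key : (q:ℤ_[q]) * (((δ3:ℤ):ℤ_[q]) * U3^2)
            = (q:ℤ_[q]) * ((q:ℤ_[q]) * (((d1:ℤ):ℤ_[q])*U1'^2 - ((e2:ℤ):ℤ_[q])*((n:ℤ):ℤ_[q])*T'^2)) := by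
          rw [hT', hU1', hd3c] at E2
          linear_combination E2
        have hcan := mul_left_cancel₀ hq0 key
        have hdvd : (q:ℤ_[q]) ∣ ((δ3:ℤ):ℤ_[q]) * U3^2 := ⟨_, hcan⟩
        have h' := (PadicInt.prime_p.dvd_or_dvd hdvd).resolve_left (int_padic_not_dvd hqδ3)
        exact PadicInt.prime_p.dvd_of_dvd_pow h'
      obtain ⟨U3', hU3'⟩ := hdU3
      have hdU2 : (q:ℤ_[q]) ∣ U2 := by
        have key : ((δ2:ℤ):ℤ_[q]) * U2^2
            = (q:ℤ_[q]) * ((q:ℤ_[q]) * (((δ3:ℤ):ℤ_[q])*U3'^2 - ((ε1:ℤ):ℤ_[q])*((n:ℤ):ℤ_[q])*T'^2)) := by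
          rw [hT', hU3'] at E1'
          linear_combination E1'
        have hdvd : (q:ℤ_[q]) ∣ ((δ2:ℤ):ℤ_[q]) * U2^2 := ⟨_, key⟩
        have h' := (PadicInt.prime_p.dvd_or_dvd hdvd).resolve_left (int_padic_not_dvd hqδ2)
        exact PadicInt.prime_p.dvd_of_dvd_pow h'
      have punit : ∀ x : ℤ_[q], (q:ℤ_[q]) ∣ x → (x : ℚ_[q]) ≠ 1 := by
        intro x hx hx1
        have hlt := (PadicInt.norm_lt_one_iff_dvd x).2 hx
        rw [PadicInt.norm_def, hx1, norm_one] at hlt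
        exact lt_irrefl _ hlt
      rcases hmem with h | h | h | h
      · exact punit T ⟨T', hT'⟩ (by show t/m = 1; rw [h]; exact div_self (h ▸ hm0))
      · exact punit U1 ⟨U1', hU1'⟩ (by show u1/m = 1; rw [h]; exact div_self (h ▸ hm0))
      · exact punit U2 hdU2 (by show u2/m = 1; rw [h]; exact div_self (h ▸ hm0))
      · exact punit U3 ⟨U3', hU3'⟩ (by show u3/m = 1; rw [h]; exact div_self (h ▸ hm0))
    · refine ⟨(d1 : ZMod q) * PadicInt.toZMod U1 * (PadicInt.toZMod T)⁻¹, ?_⟩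
      push_cast
      field_simp
      linear_combination (d1 : ZMod q) * hE2bar
  · intro hsq
    obtain ⟨r, hr⟩ := hsq
    have hrne : r ≠ 0 := by
      intro h0
      rw [h0, mul_zero] at hr
      have hne : ((e2*n*d1 : ℤ) : ZMod q) ≠ 0 := hz _ (by
        intro hdvd
        rcases hpz.dvd_mul.1 hdvd with h | h
        · rcases hpz.dvd_mul.1 h with h' | h'
          · exact hqe2 h'
          · exact hqn h'
        · exact hqd1 h)
      exact hne hr
    have hcard : Fintype.card (ZMod q) % 2 = 1 := by
      rw [ZMod.card]; exact Nat.odd_iff.1 (hp.odd_of_ne_two hq)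
    obtain ⟨a, b, hab⟩ := FiniteField.exists_root_sum_quadratic
      (f := Polynomial.C ((δ2 : ℤ) : ZMod q) * Polynomial.X^2 + Polynomial.C (0 : ZMod q) * Polynomial.X
        + Polynomial.C ((ε1*n : ℤ) : ZMod q))
      (g := Polynomial.C (-((δ3 : ℤ) : ZMod q)) * Polynomial.X^2 + Polynomial.C (0 : ZMod q) * Polynomial.X
        + Polynomial.C (0 : ZMod q))
      (Polynomial.degree_quadratic (hz δ2 hqδ2))
      (Polynomial.degree_quadratic (neg_ne_zero.2 (hz δ3 hqδ3))) hcard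
    simp only [Polynomial.eval_add, Polynomial.eval_mul, Polynomial.eval_pow, Polynomial.eval_C,
      Polynomial.eval_X, zero_mul, add_zero, zero_add, Int.cast_mul, neg_mul] at hab
    have hab' : ((δ2:ℤ):ZMod q)*a^2 - ((δ3:ℤ):ZMod q)*b^2 + ((ε1:ℤ):ZMod q)*((n:ℤ):ZMod q) = 0 := by
      linear_combination hab
    have key : ∃ U2 U3 : ℤ_[q],
        ((ε1:ℤ):ℤ_[q])*((n:ℤ):ℤ_[q]) + ((δ2:ℤ):ℤ_[q])*U2^2 - ((δ3:ℤ):ℤ_[q])*U3^2 = 0 := by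
      by_cases ha : a = 0
      · have hb : b ≠ 0 := by
          intro hb0
          rw [ha, hb0] at hab'
          simp at hab'
          rcases hab' with h | h
          · exact hz ε1 hqε1 h
          · exact hz n hqn h
        obtain ⟨z, hzz⟩ := padic_rep hq ((δ3:ℤ):ℤ_[q]) ((ε1*n : ℤ):ℤ_[q]) (int_unit_padic hqδ3) b hb
          (by
            rw [map_intCast, map_intCast]
            push_cast
            rw [ha] at hab'
            linear_combination hab')
        refine ⟨0, z, ?_⟩
        have hc : ((ε1*n : ℤ):ℤ_[q]) = ((ε1:ℤ):ℤ_[q])*((n:ℤ):ℤ_[q]) := by push_cast; ring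
        rw [hc] at hzz
        linear_combination -hzz
      · set U3 : ℤ_[q] := ((b.val : ℕ) : ℤ_[q]) with hU3def
        have hU3bar : PadicInt.toZMod U3 = b := by
          simp [hU3def, map_natCast, ZMod.natCast_val, ZMod.cast_id]
        have hβbar : PadicInt.toZMod ((( -(ε1*n) : ℤ) : ℤ_[q]) + ((δ3:ℤ):ℤ_[q])*U3^2)
            = PadicInt.toZMod ((δ2:ℤ):ℤ_[q]) * a^2 := by
          rw [map_add, map_mul, map_pow, map_intCast, map_intCast, map_intCast, hU3bar]
          push_cast
          linear_combination -hab'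
        obtain ⟨z, hzz⟩ := padic_rep hq ((δ2:ℤ):ℤ_[q]) _ (int_unit_padic hqδ2) a ha hβbar
        refine ⟨z, U3, ?_⟩
        have hc : ((-(ε1*n) : ℤ):ℤ_[q]) = -(((ε1:ℤ):ℤ_[q])*((n:ℤ):ℤ_[q])) := by push_cast; ring
        rw [hc] at hzz
        linear_combination hzz
    obtain ⟨U2, U3, hkey⟩ := key
    have hd1zz : ((d1:ℤ) : ZMod q) ≠ 0 := hz d1 hqd1
    have hBbar : PadicInt.toZMod (((e2*n : ℤ) : ℤ_[q]) + (q:ℤ_[q]) * ((δ3:ℤ):ℤ_[q]) * U3^2)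
        = PadicInt.toZMod ((d1:ℤ):ℤ_[q]) * (((r : ZMod q) * ((d1:ℤ):ZMod q)⁻¹))^2 := by
      rw [map_add, map_mul, map_mul, map_pow, map_intCast, map_intCast, map_intCast, map_natCast]
      rw [ZMod.natCast_self, zero_mul, zero_mul, add_zero]
      push_cast
      push_cast at hr
      field_simp
      linear_combination hr
    have hc0 : (r : ZMod q) * ((d1:ℤ):ZMod q)⁻¹ ≠ 0 := mul_ne_zero hrne (inv_ne_zero hd1zz)
    obtain ⟨U1, hU1⟩ := padic_rep hq ((d1:ℤ):ℤ_[q]) _ (int_unit_padic hqd1) _ hc0 hBbar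
    have k1 : ((ε1:ℤ):ℚ_[q])*((n:ℤ):ℚ_[q]) + ((δ2:ℤ):ℚ_[q])*((U2:ℚ_[q]))^2
        - ((δ3:ℤ):ℚ_[q])*((U3:ℚ_[q]))^2 = 0 := by
      have := congrArg (fun z : ℤ_[q] => (z : ℚ_[q])) hkey
      push_cast at this
      linear_combination this
    have k2 : ((d1:ℤ):ℚ_[q])*((U1:ℚ_[q]))^2
        = ((e2:ℤ):ℚ_[q])*((n:ℤ):ℚ_[q]) + (q:ℚ_[q])*((δ3:ℤ):ℚ_[q])*((U3:ℚ_[q]))^2 := by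
      have := congrArg (fun z : ℤ_[q] => (z : ℚ_[q])) hU1
      push_cast at this
      linear_combination this
    have hs' : ((e1:ℤ):ℚ_[q]) + ((e2:ℤ):ℚ_[q]) + ((e3:ℤ):ℚ_[q]) = 0 := by
      exact_mod_cast congrArg (fun z : ℤ => ((z : ℚ_[q]))) hs
    have eq1 : (e1 : ℚ_[q]) * n * (1:ℚ_[q]) ^ 2 + d2 * (U2:ℚ_[q]) ^ 2 - d3 * (U3:ℚ_[q]) ^ 2 = 0 := by
      rw [he1, hd2, hd3]
      push_cast
      linear_combination (q:ℚ_[q]) * k1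
    have eq2 : (e2 : ℚ_[q]) * n * (1:ℚ_[q]) ^ 2 + d3 * (U3:ℚ_[q]) ^ 2 - d1 * (U1:ℚ_[q]) ^ 2 = 0 := by
      rw [hd3]
      push_cast
      linear_combination -k2
    have eq3 : (e3 : ℚ_[q]) * n * (1:ℚ_[q]) ^ 2 + d1 * (U1:ℚ_[q]) ^ 2 - d2 * (U2:ℚ_[q]) ^ 2 = 0 := by
      linear_combination -eq1 - eq2 + ((n:ℤ):ℚ_[q]) * hs'
    exact ⟨1, (U1:ℚ_[q]), (U2:ℚ_[q]), (U3:ℚ_[q]), by simp, eq1, eq2, eq3⟩
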